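/- For any n×n matrices A and C, any permutation π, and the Hamiltonian cycle matrix H_n: (i) QAP(A, H_n, π^[k]) = QAP(A, H_n, π) for every cyclic shift π^[k] of π, and (ii) Σ_{k=0}^{n−1} LAP(C, π^[k]) = Σ_{i=1}^n Σ_{j=1}^n c_{ij}. -/

import Mathlib

open Finset

def QAP {n : ℕ} (A B : Matrix (Fin n) (Fin n) ℝ) (π : Equiv.Perm (Fin n)) : ℝ :=
  ∑ i, ∑ j, A (π i) (π j) * B i j

def LAP {n : ℕ} (C : Matrix (Fin n) (Fin n) ℝ) (π : Equiv.Perm (Fin n)) : ℝ :=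
  ∑ i, C i (π i)

def Fmat (n : ℕ) : Matrix (Fin n) (Fin n) ℝ := fun i j => if j < i then 1 else 0

def Hmat (n : ℕ) : Matrix (Fin n) (Fin n) ℝ :=
  fun i j => if (j : ℕ) = ((i : ℕ) + 1) % n then 1 else 0

def DirCut {n : ℕ} (I : Finset (Fin n)) : Matrix (Fin n) (Fin n) ℝ :=
  fun i j => if i ∈ I ∧ j ∉ I then 1 else 0

def Balanced3Cycle {n : ℕ} (A : Matrix (Fin n) (Fin n) ℝ) : Prop :=
  ∀ i j k, A i j + A j k + A k i = A j i + A k j + A i k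

def Linearizable {n : ℕ} (A B : Matrix (Fin n) (Fin n) ℝ) : Prop :=
  ∃ C : Matrix (Fin n) (Fin n) ℝ, ∀ π : Equiv.Perm (Fin n), QAP A B π = LAP C π

lemma Hmat_eq {m : ℕ} (i j : Fin (m+1)) : Hmat (m+1) i j = if j = i + 1 then 1 else 0 := by
  simp [Hmat, Fin.ext_iff, Fin.add_def, Nat.add_mod, Fin.val_one]

lemma Hmat_rot {m : ℕ} (i j : Fin (m+1)) :
    Hmat (m+1) (finRotate (m+1) i) (finRotate (m+1) j) = Hmat (m+1) i j := by
  simp only [Hmat_eq, finRotate_succ_apply, add_left_inj]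

open Fin.NatCast in
lemma rot_pow {m : ℕ} (k : ℕ) (i : Fin (m+1)) :
    ((finRotate (m+1)) ^ k) i = i + (k : Fin (m+1)) := by
  induction k generalizing i with
  | zero => simp
  | succ k ih =>
    rw [pow_succ, Equiv.Perm.mul_apply, finRotate_succ_apply, ih]
    push_cast
    rw [add_assoc, add_comm (1 : Fin (m+1))]

lemma QAP_shift {n : ℕ} (A : Matrix (Fin n) (Fin n) ℝ) (σ : Equiv.Perm (Fin n)) :
    QAP A (Hmat n) (σ * finRotate n) = QAP A (Hmat n) σ := by
  cases n with
  | zero => simp [QAP]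
  | succ m =>
    unfold QAP
    calc ∑ i, ∑ j, A ((σ * finRotate (m+1)) i) ((σ * finRotate (m+1)) j) * Hmat (m+1) i j
        = ∑ i, ∑ j, A (σ (finRotate (m+1) i)) (σ (finRotate (m+1) j)) *
            Hmat (m+1) (finRotate (m+1) i) (finRotate (m+1) j) := by
          simp only [Equiv.Perm.mul_apply, Hmat_rot]
      _ = ∑ i, ∑ j, A (σ i) (σ j) * Hmat (m+1) i j := by
          rw [← Equiv.sum_comp (finRotate (m+1))
            (fun i => ∑ j, A (σ i) (σ j) * Hmat (m+1) i j)]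
          refine Finset.sum_congr rfl fun i _ => ?_
          exact Equiv.sum_comp (finRotate (m+1))
            (fun j => A (σ (finRotate (m+1) i)) (σ j) * Hmat (m+1) (finRotate (m+1) i) j)

open Fin.NatCast in
theorem stmt17 {n : ℕ} (A C : Matrix (Fin n) (Fin n) ℝ) (π : Equiv.Perm (Fin n)) :
    (∀ k : ℕ, QAP A (Hmat n) (π * (finRotate n) ^ k) = QAP A (Hmat n) π) ∧
    (∑ k ∈ Finset.range n, LAP C (π * (finRotate n) ^ k)) = ∑ i, ∑ j, C i j := by
  constructor
  · intro k
    induction k with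
    | zero => simp
    | succ k ih => rw [pow_succ, ← mul_assoc, QAP_shift, ih]
  · cases n with
    | zero => simp
    | succ m =>
      unfold LAP
      rw [Finset.sum_comm]
      refine Finset.sum_congr rfl fun i _ => ?_
      rw [← Fin.sum_univ_eq_sum_range
        (fun k => C i ((π * finRotate (m+1) ^ k) i)) (m+1)]
      rw [← Equiv.sum_comp ((Equiv.addLeft i).trans (π : Equiv.Perm (Fin (m+1))))
        (fun j => C i j)]
      refine Finset.sum_congr rfl fun k _ => ?_
      simp [Equiv.Perm.mul_apply, rot_pow, Fin.cast_val_eq_self]
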